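/- If ν is a quasi-stationary distribution of a subcritical Galton–Watson process with mean m ∈ (0,1), then there exists α ∈ (0,∞) such that P_ν(N_n > 0) = m^{αn} for all n ∈ ℕ. -/

import Mathlib

open MeasureTheory Filter Topology

noncomputable def genFun (p : ℕ → ℝ) (s : ℝ) : ℝ := ∑' j, p j * s ^ j

noncomputable def genFunIter (p : ℕ → ℝ) : ℕ → ℝ → ℝ
  | 0, s => s
  | n + 1, s => genFun p (genFunIter p n s)

private lemma summable_of_tsum_eq_one {w : ℕ → ℝ} (h : ∑' j, w j = 1) : Summable w := by
  by_contra hc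
  rw [tsum_eq_zero_of_not_summable hc] at h
  norm_num at h

private lemma summable_weight {w : ℕ → ℝ} (hw : ∀ j, 0 ≤ w j) (hs : Summable w)
    {t : ℝ} (ht : t ∈ Set.Icc (0:ℝ) 1) : Summable (fun j => w j * t ^ j) :=
  hs.of_nonneg_of_le (fun j => mul_nonneg (hw j) (pow_nonneg ht.1 j))
    (fun j => mul_le_of_le_one_right (hw j) (pow_le_one₀ ht.1 ht.2))

private lemma tsum_weight_mem {w : ℕ → ℝ} (hw : ∀ j, 0 ≤ w j) (hsum : ∑' j, w j = 1)
    {t : ℝ} (ht : t ∈ Set.Icc (0:ℝ) 1) : (∑' j, w j * t ^ j) ∈ Set.Icc (0:ℝ) 1 := by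
  have hs := summable_of_tsum_eq_one hsum
  constructor
  · exact tsum_nonneg fun j => mul_nonneg (hw j) (pow_nonneg ht.1 j)
  · calc (∑' j, w j * t ^ j) ≤ ∑' j, w j := by
          refine Summable.tsum_le_tsum (fun j => mul_le_of_le_one_right (hw j) (pow_le_one₀ ht.1 ht.2))
            (summable_weight hw hs ht) hs
    _ = 1 := hsum

private lemma genFunIter_comm (p : ℕ → ℝ) (n : ℕ) (s : ℝ) :
    genFunIter p (n + 1) s = genFunIter p n (genFun p s) := by
  induction n with
  | zero => rfl
  | succ n ih => show genFun p (genFunIter p (n+1) s) = _; rw [ih]; rfl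

/-- if `ν` is a quasi-stationary distribution of a subcritical
GW-process with mean `m ∈ (0,1)`, then there exists `α ∈ (0,∞)` with
`P_ν(N_n > 0) = m^{αn}` for all `n`.  Here `law k n j = P_k(N_n = j)`,
characterized by the generating function identity `∑_j law k n j s^j = f_n(s)^k`,
and `P_ν(N_n = j) = ∑_k ν(k) law k n j`. -/
theorem stmt1 (p ν : ℕ → ℝ) (m : ℝ)
    (hp_nonneg : ∀ j, 0 ≤ p j) (hp_sum : ∑' j, p j = 1)
    (hm : m = ∑' j : ℕ, (j : ℝ) * p j) (hm_pos : 0 < m) (hm_lt : m < 1)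
    (hν_nonneg : ∀ j, 0 ≤ ν j) (hν_zero : ν 0 = 0) (hν_sum : ∑' j, ν j = 1)
    (law : ℕ → ℕ → ℕ → ℝ)
    (hlaw_nonneg : ∀ k n j, 0 ≤ law k n j)
    (hlaw_sum : ∀ k n, ∑' j, law k n j = 1)
    (hlaw_gf : ∀ k n, ∀ s ∈ Set.Icc (0 : ℝ) 1,
        ∑' j, law k n j * s ^ j = genFunIter p n s ^ k)
    (hQSD : ∀ n : ℕ, ∀ j : ℕ, 1 ≤ j →
      (∑' k, ν k * law k n j) / (1 - ∑' k, ν k * law k n 0) = ν j) :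
    ∃ α : ℝ, 0 < α ∧ ∀ n : ℕ,
      1 - (∑' k, ν k * law k n 0) = m ^ (α * (n : ℝ)) := by
  have hps : Summable p := summable_of_tsum_eq_one hp_sum
  have hνs : Summable ν := summable_of_tsum_eq_one hν_sum
  have hlaws : ∀ k n, Summable (fun j => law k n j) := fun k n =>
    summable_of_tsum_eq_one (hlaw_sum k n)
  set G : ℝ → ℝ := fun t => ∑' k, ν k * t ^ k with hG
  set x : ℕ → ℝ := fun n => genFunIter p n 0 with hx
  -- iterates stay in [0,1]
  have hmem : ∀ n, ∀ s ∈ Set.Icc (0:ℝ) 1, genFunIter p n s ∈ Set.Icc (0:ℝ) 1 := by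
    intro n
    induction n with
    | zero => intro s hs; exact hs
    | succ n ih =>
      intro s hs
      exact tsum_weight_mem hp_nonneg hp_sum (ih s hs)
  have h01 : (0:ℝ) ∈ Set.Icc (0:ℝ) 1 := by norm_num
  have hxmem : ∀ n, x n ∈ Set.Icc (0:ℝ) 1 := fun n => hmem n 0 h01
  have hGmem : ∀ t ∈ Set.Icc (0:ℝ) 1, G t ∈ Set.Icc (0:ℝ) 1 := fun t ht =>
    tsum_weight_mem hν_nonneg hν_sum ht
  -- law k n 0 = (x n) ^ k
  have hlaw0 : ∀ k n, law k n 0 = x n ^ k := by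
    intro k n
    have h := hlaw_gf k n 0 h01
    rw [tsum_eq_single 0 (by intro j hj; simp [zero_pow hj])] at h
    simpa using h
  -- the untruncated measure at time n, written via G
  have hq : ∀ n, (∑' k, ν k * law k n 0) = G (x n) := by
    intro n
    exact tsum_congr fun k => by rw [hlaw0 k n]
  -- key functional identity
  have hkey : ∀ n, (1 - G (x n)) ≠ 0 → ∀ s ∈ Set.Icc (0:ℝ) 1,
      G (genFunIter p n s) = G (x n) + (1 - G (x n)) * G s := by
    intro n hne s hs
    have hFs := hmem n s hs
    -- double sum
    have hinner : ∀ k, (∑' j, ν k * (law k n j * s ^ j)) = ν k * genFunIter p n s ^ k := by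
      intro k
      rw [tsum_mul_left, hlaw_gf k n s hs]
    have hsum_inner : ∀ k, Summable (fun j => ν k * (law k n j * s ^ j)) := fun k =>
      (summable_weight (hlaw_nonneg k n) (hlaws k n) hs).mul_left _
    have hsum_outer : Summable (fun k => ∑' j, ν k * (law k n j * s ^ j)) := by
      apply Summable.of_nonneg_of_le (g := fun k => ∑' j, ν k * (law k n j * s ^ j))
        (f := ν)
      · intro k
        exact tsum_nonneg fun j => mul_nonneg (hν_nonneg k)
          (mul_nonneg (hlaw_nonneg k n j) (pow_nonneg hs.1 j))
      · intro k
        rw [hinner k]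
        exact mul_le_of_le_one_right (hν_nonneg k) (pow_le_one₀ hFs.1 hFs.2)
      · exact hνs
    have huncurry : Summable (Function.uncurry fun k j => ν k * (law k n j * s ^ j)) := by
      rw [summable_prod_of_nonneg]
      · exact ⟨hsum_inner, hsum_outer⟩
      · intro q
        exact mul_nonneg (hν_nonneg _) (mul_nonneg (hlaw_nonneg _ n _) (pow_nonneg hs.1 _))
    have hsum_col : ∀ j, Summable (fun k => ν k * (law k n j * s ^ j)) := by
      intro j
      apply hνs.of_nonneg_of_le
      · intro k
        exact mul_nonneg (hν_nonneg k) (mul_nonneg (hlaw_nonneg k n j) (pow_nonneg hs.1 j))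
      · intro k
        refine mul_le_of_le_one_right (hν_nonneg k) ?_
        have h1 : law k n j ≤ 1 := by
          calc law k n j ≤ ∑' j, law k n j :=
                Summable.le_tsum (hlaws k n) j (fun i _ => hlaw_nonneg k n i)
          _ = 1 := hlaw_sum k n
        exact mul_le_one₀ h1 (pow_nonneg hs.1 j) (pow_le_one₀ hs.1 hs.2)
    have hswap : (∑' k, ∑' j, ν k * (law k n j * s ^ j))
        = ∑' j, ∑' k, ν k * (law k n j * s ^ j) :=
      (Summable.tsum_comm' huncurry hsum_inner hsum_col).symm
    -- LHS = G (F n s)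
    have hL : G (genFunIter p n s) = ∑' k, ∑' j, ν k * (law k n j * s ^ j) := by
      exact tsum_congr fun k => (hinner k).symm
    -- now compute the column sums
    have hcol : ∀ j, (∑' k, ν k * (law k n j * s ^ j)) = (∑' k, ν k * law k n j) * s ^ j := by
      intro j
      rw [← tsum_mul_right]
      exact tsum_congr fun k => by ring
    have hQSD' : ∀ j, 1 ≤ j → (∑' k, ν k * law k n j) = ν j * (1 - G (x n)) := by
      intro j hj
      have h := hQSD n j hj
      rw [hq n] at h
      field_simp at h
      linarith [h]
    -- pointwise decomposition
    have hdecomp : ∀ j, (∑' k, ν k * law k n j) * s ^ j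
        = (if j = 0 then G (x n) else 0) + (1 - G (x n)) * (ν j * s ^ j) := by
      intro j
      rcases Nat.eq_zero_or_pos j with hj | hj
      · subst hj
        simp [hq n, hν_zero]
      · rw [hQSD' j hj, if_neg (Nat.pos_iff_ne_zero.mp hj)]
        ring
    have hsumz : Summable (fun j => (if j = 0 then G (x n) else (0:ℝ))) := by
      apply summable_of_ne_finset_zero (s := {0})
      intro j hj
      simp only [Finset.mem_singleton] at hj
      simp [hj]
    have hsumν : Summable (fun j => (1 - G (x n)) * (ν j * s ^ j)) :=
      ((summable_weight hν_nonneg hνs hs).mul_left _)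
    calc G (genFunIter p n s) = ∑' j, ∑' k, ν k * (law k n j * s ^ j) := by rw [hL, hswap]
      _ = ∑' j, ((if j = 0 then G (x n) else 0) + (1 - G (x n)) * (ν j * s ^ j)) := by
          exact tsum_congr fun j => by rw [hcol j, hdecomp j]
      _ = (∑' j, (if j = 0 then G (x n) else 0)) + ∑' j, (1 - G (x n)) * (ν j * s ^ j) :=
          Summable.tsum_add hsumz hsumν
      _ = G (x n) + (1 - G (x n)) * G s := by
          rw [tsum_eq_single 0 (by intro j hj; simp [hj]), if_pos rfl, tsum_mul_left]
  -- x 1 = p 0 and G 0 = 0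
  have hx1 : x 1 = p 0 := by
    show genFun p (genFunIter p 0 0) = p 0
    show (∑' j, p j * (0:ℝ) ^ j) = p 0
    rw [tsum_eq_single 0 (by intro j hj; simp [zero_pow hj])]
    simp
  have hG0 : G 0 = 0 := by
    show (∑' k, ν k * (0:ℝ) ^ k) = 0
    rw [tsum_eq_single 0 (by intro k hk; simp [zero_pow hk])]
    simp [hν_zero]
  -- p 0 > 0
  have hp0 : 0 < p 0 := by
    rcases lt_or_eq_of_le (hp_nonneg 0) with h | h
    · exact h
    · exfalso
      have hms : Summable (fun j : ℕ => (j:ℝ) * p j) := by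
        by_contra hc
        rw [tsum_eq_zero_of_not_summable hc] at hm
        exact hm_pos.ne' (hm.symm ▸ rfl)
      have : (1:ℝ) ≤ m := by
        rw [hm, ← hp_sum]
        refine Summable.tsum_le_tsum ?_ hps hms
        intro j
        rcases Nat.eq_zero_or_pos j with hj | hj
        · subst hj; simp [← h]
        · have : (1:ℝ) ≤ (j:ℝ) := by exact_mod_cast hj
          nlinarith [hp_nonneg j]
      linarith
  set θ : ℝ := 1 - G (p 0) with hθ
  -- θ > 0 : otherwise the QSD relation degenerates
  have hθ_pos : 0 < θ := by
    rcases lt_or_eq_of_le (by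
      have := (hGmem (p 0) ⟨hp_nonneg 0, by
        calc p 0 ≤ ∑' j, p j := Summable.le_tsum hps 0 (fun i _ => hp_nonneg i)
        _ = 1 := hp_sum⟩).2
      linarith : (0:ℝ) ≤ θ) with h | h
    · exact h
    · exfalso
      have hzero : (1 - ∑' k, ν k * law k 1 0) = 0 := by
        rw [hq 1, hx1]; linarith
      have hν_all : ∀ j, ν j = 0 := by
        intro j
        rcases Nat.eq_zero_or_pos j with hj | hj
        · subst hj; exact hν_zero
        · have := hQSD 1 j hj
          rw [hzero, div_zero] at this
          exact this.symm
      have : (∑' j, ν j) = 0 := by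
        rw [tsum_congr hν_all]; exact tsum_zero
      rw [this] at hν_sum
      norm_num at hν_sum
  -- θ < 1 : G (p 0) > 0
  have hθ_lt : θ < 1 := by
    have hk : ∃ k, 0 < ν k := by
      by_contra hc
      push_neg at hc
      have : ∀ k, ν k = 0 := fun k => le_antisymm (hc k) (hν_nonneg k)
      rw [tsum_congr this] at hν_sum
      simp at hν_sum
    obtain ⟨k, hk⟩ := hk
    have hsummG : Summable (fun k => ν k * p 0 ^ k) :=
      summable_weight hν_nonneg hνs ⟨hp_nonneg 0, by
        calc p 0 ≤ ∑' j, p j := Summable.le_tsum hps 0 (fun i _ => hp_nonneg i)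
        _ = 1 := hp_sum⟩
    have : 0 < G (p 0) := by
      calc (0:ℝ) < ν k * p 0 ^ k := mul_pos hk (pow_pos hp0 k)
      _ ≤ G (p 0) := Summable.le_tsum hsummG k (fun i _ =>
          mul_nonneg (hν_nonneg i) (pow_nonneg (hp_nonneg 0) i))
    linarith
  -- geometric recursion
  have hgeo : ∀ n, 1 - G (x n) = θ ^ n := by
    intro n
    induction n with
    | zero =>
      show 1 - G (x 0) = 1
      have : x 0 = 0 := rfl
      rw [this, hG0]; ring
    | succ n ih =>
      have hne : 1 - G (x n) ≠ 0 := by rw [ih]; positivity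
      have hp0mem : p 0 ∈ Set.Icc (0:ℝ) 1 := ⟨hp_nonneg 0, by
        calc p 0 ≤ ∑' j, p j := Summable.le_tsum hps 0 (fun i _ => hp_nonneg i)
        _ = 1 := hp_sum⟩
      have hstep := hkey n hne (p 0) hp0mem
      have hxs : x (n + 1) = genFunIter p n (p 0) := by
        rw [hx]
        show genFunIter p (n+1) 0 = _
        rw [genFunIter_comm]
        have hf0 : genFun p 0 = p 0 := by
          show (∑' j, p j * (0:ℝ) ^ j) = p 0
          rw [tsum_eq_single 0 (by intro j hj; simp [zero_pow hj])]
          simp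
        rw [hf0]
      have e1 : G (x n) = 1 - θ ^ n := by linarith [ih]
      have e2 : G (p 0) = 1 - θ := by rw [hθ]; ring
      rw [hxs, hstep, e1, e2]
      ring
  -- conclusion
  refine ⟨Real.log θ / Real.log m, ?_, ?_⟩
  · have hlm : Real.log m < 0 := Real.log_neg hm_pos hm_lt
    have hlθ : Real.log θ < 0 := Real.log_neg hθ_pos hθ_lt
    rw [div_pos_iff]
    right
    exact ⟨hlθ, hlm⟩
  · intro n
    rw [hq n, hgeo n]
    have hlm : Real.log m ≠ 0 := (Real.log_neg hm_pos hm_lt).ne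
    rw [Real.rpow_def_of_pos hm_pos]
    have : Real.log m * (Real.log θ / Real.log m * (n:ℝ)) = (n:ℝ) * Real.log θ := by
      field_simp
    rw [this, Real.exp_nat_mul, Real.exp_log hθ_pos]
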